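/- arXiv:2102.06258 — 4 statements merged into one kernel-verified Lean document; each statement's English description precedes it below -/
import Mathlib

section
/- Let (Ω, μ) be a probability space and X : Ω → ℝⁿ a measurable map with E[‖X‖²] < ∞. Suppose there are constants 0 < σ ≤ ρ such that σ‖v‖² ≤ E[⟨v, X⟩²] ≤ ρ‖v‖² for every v ∈ ℝⁿ. Let Φ : L²(μ; ℝ) → L²(μ; ℝ) be Lipschitz with constant τ ≥ 0 satisfying τρ < σ. For W ∈ ℝⁿ write ℓ_W ∈ L²(μ) for the function ω ↦ ⟨W, X(ω)⟩, and define h : ℝⁿ → ℝⁿ by h(W) = E[ X · (ℓ_W − Φ(ℓ_W)) ] (the expectation of the ℝⁿ-valued integrand). Then for all W, W' ∈ ℝⁿ one has ⟨W − W', h(W) − h(W')⟩ ≥ (σ − τρ)‖W − W'‖², i.e. h is strongly monotone with constant δ := σ − τρ > 0. -/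
open MeasureTheory

/-- Strong monotonicity of the drift `h` in the paper's online-learning lemma (Section 3.3). -/
theorem stmt0 {n : ℕ} {Ω : Type*} [MeasurableSpace Ω] (μ : Measure Ω) [IsProbabilityMeasure μ]
    (X : Ω → EuclideanSpace ℝ (Fin n)) (hXm : Measurable X)
    (hX2 : Integrable (fun ω => ‖X ω‖ ^ 2) μ)
    (σ ρ : ℝ) (hσ : 0 < σ) (hσρ : σ ≤ ρ)
    (hlow : ∀ v : EuclideanSpace ℝ (Fin n),
      σ * ‖v‖ ^ 2 ≤ ∫ ω, (inner ℝ v (X ω) : ℝ) ^ 2 ∂μ)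
    (hhigh : ∀ v : EuclideanSpace ℝ (Fin n),
      ∫ ω, (inner ℝ v (X ω) : ℝ) ^ 2 ∂μ ≤ ρ * ‖v‖ ^ 2)
    (Φ : Lp ℝ 2 μ → Lp ℝ 2 μ) (τ : ℝ) (hτ : 0 ≤ τ) (hτρ : τ * ρ < σ)
    (hLip : ∀ f g : Lp ℝ 2 μ, ‖Φ f - Φ g‖ ≤ τ * ‖f - g‖)
    (ℓ : EuclideanSpace ℝ (Fin n) → Lp ℝ 2 μ)
    (hℓ : ∀ W, (ℓ W : Ω → ℝ) =ᵐ[μ] fun ω => (inner ℝ W (X ω) : ℝ))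
    (h : EuclideanSpace ℝ (Fin n) → EuclideanSpace ℝ (Fin n))
    (hh : ∀ W, h W = ∫ ω, (((inner ℝ W (X ω) : ℝ)) - (Φ (ℓ W) : Ω → ℝ) ω) • X ω ∂μ) :
    ∀ W W' : EuclideanSpace ℝ (Fin n),
      (σ - τ * ρ) * ‖W - W'‖ ^ 2 ≤ (inner ℝ (W - W') (h W - h W') : ℝ) := by
  intro W W'
  have hXmem : MemLp X 2 μ :=
    (memLp_two_iff_integrable_sq_norm hXm.aestronglyMeasurable).mpr hX2
  have hinner_mem : ∀ v : EuclideanSpace ℝ (Fin n),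
      MemLp (fun ω => (inner ℝ v (X ω) : ℝ)) 2 μ := fun v => hXmem.const_inner v
  have hhalf : (1 : ENNReal) / 1 = 1 / 2 + 1 / 2 := by
    rw [ENNReal.div_add_div_same, one_add_one_eq_two, ENNReal.div_self two_ne_zero ENNReal.ofNat_ne_top, one_div_one]
  have hcoef : ∀ V : EuclideanSpace ℝ (Fin n),
      MemLp (fun ω => (inner ℝ V (X ω) : ℝ) - (Φ (ℓ V) : Ω → ℝ) ω) 2 μ :=
    fun V => (hinner_mem V).sub (Lp.memLp (Φ (ℓ V)))
  have hint : ∀ V : EuclideanSpace ℝ (Fin n),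
      Integrable (fun ω => ((inner ℝ V (X ω) : ℝ) - (Φ (ℓ V) : Ω → ℝ) ω) • X ω) μ := by
    intro V
    rw [← memLp_one_iff_integrable]
    exact hXmem.smul (hcoef V)
  set D := W - W' with hD
  set q : Ω → ℝ := fun ω => (inner ℝ D (X ω) : ℝ) with hq
  set Q : Lp ℝ 2 μ := ℓ W - ℓ W' with hQdef
  set G : Lp ℝ 2 μ := Φ (ℓ W) - Φ (ℓ W') with hGdef
  have hQ : (Q : Ω → ℝ) =ᵐ[μ] q := by
    filter_upwards [Lp.coeFn_sub (ℓ W) (ℓ W'), hℓ W, hℓ W'] with ω h1 h2 h3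
    simp only [hQdef, h1, Pi.sub_apply, h2, h3, hq, hD, inner_sub_left]
  have hG : (G : Ω → ℝ) =ᵐ[μ]
      fun ω => (Φ (ℓ W) : Ω → ℝ) ω - (Φ (ℓ W') : Ω → ℝ) ω := Lp.coeFn_sub _ _
  -- integrabilities
  have Iq2 : Integrable (fun ω => q ω ^ 2) μ := (hinner_mem D).integrable_sq
  have IGq : Integrable (fun ω => (G : Ω → ℝ) ω * q ω) μ := by
    rw [← memLp_one_iff_integrable]
    exact (hinner_mem D).smul (Lp.memLp G)
  -- main identity
  have key : (inner ℝ D (h W - h W') : ℝ)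
      = (∫ ω, q ω ^ 2 ∂μ) - ∫ ω, (G : Ω → ℝ) ω * q ω ∂μ := by
    rw [inner_sub_right, hh W, hh W', ← integral_inner (hint W) D,
      ← integral_inner (hint W') D,
      ← integral_sub ((hint W).const_inner D) ((hint W').const_inner D),
      ← integral_sub Iq2 IGq]
    refine integral_congr_ae ?_
    filter_upwards [hG] with ω hGω
    simp only [real_inner_smul_right, hGω, hq, hD, inner_sub_left]
    ring
  -- first term bound
  have hT1 : σ * ‖D‖ ^ 2 ≤ ∫ ω, q ω ^ 2 ∂μ := hlow D
  -- ‖Q‖² = ∫ q²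
  have hQnorm : ‖Q‖ ^ 2 = ∫ ω, q ω ^ 2 ∂μ := by
    rw [← real_inner_self_eq_norm_sq, L2.inner_def]
    refine integral_congr_ae ?_
    filter_upwards [hQ] with ω hω
    simp [hω, sq]
  have hQρ : ‖Q‖ ^ 2 ≤ ρ * ‖D‖ ^ 2 := by rw [hQnorm]; exact hhigh D
  -- second term bound
  have hT2 : ∫ ω, (G : Ω → ℝ) ω * q ω ∂μ ≤ τ * (ρ * ‖D‖ ^ 2) := by
    have hGQ : ∫ ω, (G : Ω → ℝ) ω * q ω ∂μ = (inner ℝ G Q : ℝ) := by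
      rw [L2.inner_def]
      refine integral_congr_ae ?_
      filter_upwards [hQ] with ω hω
      simp [hω, mul_comm]
    have h1 : (inner ℝ G Q : ℝ) ≤ ‖G‖ * ‖Q‖ := real_inner_le_norm G Q
    have h2 : ‖G‖ ≤ τ * ‖Q‖ := hLip (ℓ W) (ℓ W')
    have h3 : ‖G‖ * ‖Q‖ ≤ τ * ‖Q‖ ^ 2 := by
      rw [sq]
      nlinarith [norm_nonneg Q, norm_nonneg G]
    have h4 : τ * ‖Q‖ ^ 2 ≤ τ * (ρ * ‖D‖ ^ 2) := by nlinarith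
    rw [hGQ]; linarith
  rw [key]
  nlinarith [hT1, hT2]
end

section
/- Let (Ω, μ) be a probability space and S : Ω → Ω an ergodic measure-preserving map. Let φ : Ω → ℝⁿ and r : Ω → ℝ be bounded measurable functions, and let λ > 0. For ℓ ≥ 1 and ω ∈ Ω define the empirical matrix M_ℓ(ω) = (1/ℓ) Σ_{k=0}^{ℓ−1} φ(Sᵏ ω) φ(Sᵏ ω)ᵀ and empirical vector b_ℓ(ω) = (1/ℓ) Σ_{k=0}^{ℓ−1} φ(Sᵏ ω) r(Sᵏ ω), and let W_ℓ(ω) = (M_ℓ(ω) + λ I)⁻¹ b_ℓ(ω) be the unique minimizer of W ↦ (1/ℓ) Σ_{k=0}^{ℓ−1} (⟨W, φ(Sᵏ ω)⟩ − r(Sᵏ ω))² + λ‖W‖². Let W_∞ = (E_μ[φ φᵀ] + λ I)⁻¹ E_μ[φ r] be the unique minimizer of W ↦ E_μ[(⟨W, φ⟩ − r)²] + λ‖W‖². Then for μ-almost every ω, W_ℓ(ω) → W_∞ as ℓ → ∞. -/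
open MeasureTheory Matrix Filter

set_option linter.unusedSectionVars false
set_option linter.unusedVariables false

open MeasureTheory Matrix Filter

section BirkhoffAux

variable {Ω : Type*} [MeasurableSpace Ω] {μ : Measure Ω} [IsProbabilityMeasure μ] {T : Ω → Ω}

/-- Birkhoff sums. -/
def bS (T : Ω → Ω) (f : Ω → ℝ) (n : ℕ) (ω : Ω) : ℝ :=
  ∑ k ∈ Finset.range n, f (T^[k] ω)

lemma bS_one (T : Ω → Ω) (f : Ω → ℝ) (ω : Ω) : bS T f 1 ω = f ω := by
  simp [bS]

lemma bS_succ (T : Ω → Ω) (f : Ω → ℝ) (n : ℕ) (ω : Ω) :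
    bS T f (n + 1) ω = f ω + bS T f n (T ω) := by
  unfold bS
  rw [Finset.sum_range_succ']
  simp only [Function.iterate_succ_apply, Function.iterate_zero_apply]
  exact add_comm _ _

lemma bS_meas (hT : Measurable T) {f : Ω → ℝ} (hf : Measurable f) (n : ℕ) :
    Measurable (bS T f n) :=
  Finset.measurable_sum _ fun k _ => hf.comp (hT.iterate k)

lemma bS_abs_le {f : Ω → ℝ} {C : ℝ} (hC : ∀ ω, |f ω| ≤ C) (n : ℕ) (ω : Ω) :
    |bS T f n ω| ≤ n * C := by
  calc |bS T f n ω| ≤ ∑ k ∈ Finset.range n, |f (T^[k] ω)| := Finset.abs_sum_le_sum_abs _ _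
    _ ≤ ∑ _k ∈ Finset.range n, C := Finset.sum_le_sum fun k _ => hC _
    _ = n * C := by simp [mul_comm]

/-- Running maximum of Birkhoff sums `bS (n+1)`, `n ≤ N`. -/
def mxS (T : Ω → Ω) (f : Ω → ℝ) : ℕ → Ω → ℝ
  | 0 => fun ω => bS T f 1 ω
  | (N + 1) => fun ω => max (mxS T f N ω) (bS T f (N + 2) ω)

lemma mxS_meas (hT : Measurable T) {f : Ω → ℝ} (hf : Measurable f) (N : ℕ) :
    Measurable (mxS T f N) := by
  induction N with
  | zero => exact bS_meas hT hf 1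
  | succ N ih => exact ih.max (bS_meas hT hf (N + 2))

lemma mxS_mono (T : Ω → Ω) (f : Ω → ℝ) (N : ℕ) (ω : Ω) :
    mxS T f N ω ≤ mxS T f (N + 1) ω := by simp only [mxS]; exact le_max_left _ _

lemma bS_le_mxS (T : Ω → Ω) (f : Ω → ℝ) {n N : ℕ} (h : n ≤ N) (ω : Ω) :
    bS T f (n + 1) ω ≤ mxS T f N ω := by
  induction N with
  | zero =>
    obtain rfl := Nat.le_zero.mp h
    simp [mxS]
  | succ N ih =>
    simp only [mxS]
    rcases Nat.lt_succ_iff_lt_or_eq.mp (Nat.lt_succ_of_le h) with h' | rfl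
    · exact le_trans (ih (Nat.lt_succ_iff.mp h')) (le_max_left _ _)
    · exact le_max_right _ _

lemma mxS_eq_bS (T : Ω → Ω) (f : Ω → ℝ) (N : ℕ) (ω : Ω) :
    ∃ n ≤ N, mxS T f N ω = bS T f (n + 1) ω := by
  induction N with
  | zero => exact ⟨0, le_refl 0, rfl⟩
  | succ N ih =>
    rcases ih with ⟨n, hn, hmx⟩
    rcases max_cases (mxS T f N ω) (bS T f (N + 2) ω) with ⟨h1, _⟩ | ⟨h1, _⟩
    · exact ⟨n, hn.trans (Nat.le_succ N), by simp only [mxS]; rw [h1, hmx]⟩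
    · exact ⟨N + 1, le_refl _, by simp only [mxS]; rw [h1]⟩

lemma mxS_abs_le {f : Ω → ℝ} {C : ℝ} (hC : ∀ ω, |f ω| ≤ C) (N : ℕ) (ω : Ω) :
    |mxS T f N ω| ≤ (N + 1) * C := by
  obtain ⟨n, hn, h⟩ := mxS_eq_bS T f N ω
  rw [h]
  calc |bS T f (n + 1) ω| ≤ (n + 1) * C := by
        have := bS_abs_le (T := T) hC (n + 1) ω
        push_cast at this ⊢
        exact this
    _ ≤ (N + 1) * C := by
        have hC0 : 0 ≤ C := le_trans (abs_nonneg _) (hC ω)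
        have : (n + 1 : ℝ) ≤ (N + 1 : ℝ) := by exact_mod_cast Nat.succ_le_succ hn
        nlinarith

lemma mxS_key (T : Ω → Ω) (f : Ω → ℝ) (N : ℕ) (ω : Ω) :
    mxS T f N ω ≤ f ω + max (mxS T f N (T ω)) 0 := by
  induction N with
  | zero =>
    simp only [mxS, bS_one]
    have := le_max_right (bS T f 1 (T ω)) (0 : ℝ)
    rw [bS_one] at this
    linarith
  | succ N ih =>
    simp only [mxS]
    apply max_le
    · refine le_trans ih ?_
      have h0 := mxS_mono T f N (T ω)
      simp only [mxS] at h0 ⊢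
      gcongr
    · rw [bS_succ]
      have h1 : bS T f (N + 1) (T ω) ≤ mxS T f (N + 1) (T ω) :=
        bS_le_mxS T f (Nat.le_succ N) (T ω)
      have h2 := le_max_left (mxS T f (N + 1) (T ω)) (0 : ℝ)
      simp only [mxS] at h1 h2
      linarith

end BirkhoffAux

section BirkhoffMain

variable {Ω : Type*} [MeasurableSpace Ω] {μ : Measure Ω} [IsProbabilityMeasure μ] {T : Ω → Ω}

lemma integrable_of_bdd {f : Ω → ℝ} (hf : Measurable f) {C : ℝ} (hC : ∀ ω, |f ω| ≤ C) :
    Integrable f μ :=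
  (integrable_const C).mono' hf.aestronglyMeasurable (Filter.Eventually.of_forall hC)

/-- Maximal ergodic theorem, in the form needed: if a.e. point has some positive
Birkhoff sum, then the integral of `f` is nonnegative. -/
lemma maximal_ergodic (hT : MeasurePreserving T μ μ) {f : Ω → ℝ} (hf : Measurable f)
    {C : ℝ} (hC : ∀ ω, |f ω| ≤ C)
    (hfull : ∀ᵐ ω ∂μ, ∃ n : ℕ, 0 < bS T f (n + 1) ω) :
    0 ≤ ∫ ω, f ω ∂μ := by
  have hTm := hT.measurable
  have hint : Integrable f μ := integrable_of_bdd hf hC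
  set E : ℕ → Set Ω := fun N => {ω | 0 < mxS T f N ω} with hE
  have hEm : ∀ N, MeasurableSet (E N) := fun N =>
    measurableSet_lt measurable_const (mxS_meas hTm hf N)
  have hEmono : Monotone E := by
    intro N M hNM ω hω
    simp only [hE, Set.mem_setOf_eq] at hω ⊢
    induction M with
    | zero => exact (Nat.le_zero.mp hNM) ▸ hω
    | succ M ih =>
      rcases Nat.lt_succ_iff_lt_or_eq.mp (Nat.lt_succ_of_le hNM) with h' | rfl
      · exact lt_of_lt_of_le (ih (Nat.lt_succ_iff.mp h')) (mxS_mono T f M ω)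
      · exact hω
  have hUnion : (⋃ N, E N) = {ω | ∃ n : ℕ, 0 < bS T f (n + 1) ω} := by
    ext ω
    simp only [Set.mem_iUnion, hE, Set.mem_setOf_eq]
    constructor
    · rintro ⟨N, hN⟩
      obtain ⟨m, _, hm⟩ := mxS_eq_bS T f N ω
      exact ⟨m, hm ▸ hN⟩
    · rintro ⟨m, hm⟩
      exact ⟨m, lt_of_lt_of_le hm (bS_le_mxS T f (le_refl m) ω)⟩
  -- each set integral is nonnegative
  have hstep : ∀ N, 0 ≤ ∫ ω in E N, f ω ∂μ := by
    intro N
    set p : Ω → ℝ := fun ω => max (mxS T f N ω) 0 with hp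
    have hpm : Measurable p := (mxS_meas hTm hf N).max measurable_const
    have hpb : ∀ ω, |p ω| ≤ (N + 1) * C := by
      intro ω
      have hC0 : 0 ≤ C := le_trans (abs_nonneg _) (hC ω)
      have h1 := mxS_abs_le (T := T) hC N ω
      have h2 : (0:ℝ) ≤ (N + 1) * C := by positivity
      rw [abs_le] at h1 ⊢
      constructor
      · nlinarith [le_max_left (mxS T f N ω) (0:ℝ), h1.1]
      · rcases max_cases (mxS T f N ω) (0 : ℝ) with ⟨h, _⟩ | ⟨h, _⟩ <;> rw [hp] <;> simp [h]
        · exact h1.2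
        · exact h2
    have hpint : Integrable p μ := integrable_of_bdd hpm hpb
    have hpTint : Integrable (fun ω => p (T ω)) μ :=
      integrable_of_bdd (hpm.comp hTm) (fun ω => hpb (T ω))
    -- pointwise on E N : p ω - p (T ω) ≤ f ω
    have hkey : ∀ ω ∈ E N, p ω - p (T ω) ≤ f ω := by
      intro ω hω
      have h1 : mxS T f N ω ≤ f ω + max (mxS T f N (T ω)) 0 := mxS_key T f N ω
      have h2 : p ω = mxS T f N ω := max_eq_left (le_of_lt hω)
      simp only [hp]
      linarith [h1, h2.symm ▸ le_refl (p ω)]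
    -- ∫_{E N} p = ∫ p
    have hEp : ∫ ω in E N, p ω ∂μ = ∫ ω, p ω ∂μ := by
      have hsplit := integral_add_compl (hEm N) hpint
      have hzero : ∫ ω in (E N)ᶜ, p ω ∂μ = 0 := by
        apply setIntegral_eq_zero_of_forall_eq_zero
        intro ω hω
        have : mxS T f N ω ≤ 0 := not_lt.mp hω
        exact max_eq_right this
      linarith
    -- ∫_{E N} p∘T ≤ ∫ p∘T = ∫ p
    have hEpT : ∫ ω in E N, p (T ω) ∂μ ≤ ∫ ω, p ω ∂μ := by
      have h1 : ∫ ω in E N, p (T ω) ∂μ ≤ ∫ ω, p (T ω) ∂μ :=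
        setIntegral_le_integral hpTint
          (Filter.Eventually.of_forall fun ω => le_max_right _ _)
      have h2 : ∫ ω, p (T ω) ∂μ = ∫ ω, p ω ∂μ := by
        calc ∫ ω, p (T ω) ∂μ = ∫ x, p x ∂(Measure.map T μ) :=
              (integral_map hTm.aemeasurable hpm.aestronglyMeasurable).symm
          _ = ∫ ω, p ω ∂μ := by rw [hT.map_eq]
      linarith
    have hmono : ∫ ω in E N, (p ω - p (T ω)) ∂μ ≤ ∫ ω in E N, f ω ∂μ := by
      apply setIntegral_mono_on (hpint.sub hpTint).integrableOn hint.integrableOn (hEm N) hkey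
    have hsub : ∫ ω in E N, (p ω - p (T ω)) ∂μ
        = (∫ ω in E N, p ω ∂μ) - ∫ ω in E N, p (T ω) ∂μ :=
      integral_sub hpint.integrableOn hpTint.integrableOn
    linarith
  -- pass to the limit
  have hU : MeasurableSet (⋃ N, E N) := MeasurableSet.iUnion hEm
  have htend : Tendsto (fun N => ∫ ω in E N, f ω ∂μ) atTop
      (nhds (∫ ω in ⋃ N, E N, f ω ∂μ)) :=
    tendsto_setIntegral_of_monotone hEm hEmono hint.integrableOn
  have hlim : 0 ≤ ∫ ω in ⋃ N, E N, f ω ∂μ := ge_of_tendsto' htend hstep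
  -- the union has full measure
  have hae : (⋃ N, E N) =ᵐ[μ] Set.univ := by
    rw [Filter.eventuallyEq_univ]
    rw [hUnion]
    exact hfull
  calc (0 : ℝ) ≤ ∫ ω in ⋃ N, E N, f ω ∂μ := hlim
    _ = ∫ ω, f ω ∂μ := by rw [Measure.restrict_congr_set hae, Measure.restrict_univ]

end BirkhoffMain

section LimsupAux

lemma bddu_le {u : ℕ → ℝ} {C : ℝ} (hu : ∀ n, |u n| ≤ C) :
    IsBoundedUnder (· ≤ ·) atTop u :=
  ⟨C, Filter.eventually_map.mpr (Filter.Eventually.of_forall fun n => (abs_le.mp (hu n)).2)⟩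

lemma bddu_ge {u : ℕ → ℝ} {C : ℝ} (hu : ∀ n, |u n| ≤ C) :
    IsBoundedUnder (· ≥ ·) atTop u :=
  ⟨-C, Filter.eventually_map.mpr (Filter.Eventually.of_forall fun n => (abs_le.mp (hu n)).1)⟩

lemma limsup_eq_of_tendsto_sub {u v : ℕ → ℝ} {C : ℝ} (hu : ∀ n, |u n| ≤ C)
    (hv : ∀ n, |v n| ≤ C) (h : Tendsto (fun n => u n - v n) atTop (nhds 0)) :
    limsup u atTop = limsup v atTop := by
  have key : ∀ {a b : ℕ → ℝ}, (∀ n, |a n| ≤ C) → (∀ n, |b n| ≤ C) →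
      Tendsto (fun n => a n - b n) atTop (nhds 0) →
      limsup a atTop ≤ limsup b atTop := by
    intro a b ha hb hab
    have h1 : limsup ((fun n => a n - b n) + b) atTop ≤
        limsup (fun n => a n - b n) atTop + limsup b atTop :=
      limsup_add_le hab.isBoundedUnder_ge hab.isBoundedUnder_le
        ((bddu_ge hb).isCoboundedUnder_le) (bddu_le hb)
    have h2 : ((fun n => a n - b n) + b) = a := by funext n; simp
    rw [h2, hab.limsup_eq, zero_add] at h1
    exact h1
  have h' : Tendsto (fun n => v n - u n) atTop (nhds 0) := by
    have := h.neg
    simpa using this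
  exact le_antisymm (key hu hv h) (key hv hu h')

lemma neg_limsup_neg (u : ℕ → ℝ) : -limsup (fun n => -u n) atTop = liminf u atTop := by
  rw [limsup_eq, liminf_eq, Real.sInf_def, neg_neg]
  congr 1
  ext a
  simp only [Set.mem_neg, Set.mem_setOf_eq, neg_le_neg_iff]

end LimsupAux

section BirkhoffThm

variable {Ω : Type*} [MeasurableSpace Ω] {μ : Measure Ω} [IsProbabilityMeasure μ] {T : Ω → Ω}

/-- Birkhoff averages. -/
noncomputable def bA (T : Ω → Ω) (f : Ω → ℝ) (l : ℕ) (ω : Ω) : ℝ := (l : ℝ)⁻¹ * bS T f l ω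

lemma bA_abs_le {f : Ω → ℝ} {C : ℝ} (hC : ∀ ω, |f ω| ≤ C) (l : ℕ) (ω : Ω) :
    |bA T f l ω| ≤ C := by
  have hC0 : 0 ≤ C := le_trans (abs_nonneg _) (hC ω)
  rcases Nat.eq_zero_or_pos l with rfl | hl
  · simp [bA, bS, hC0]
  · have hl' : (0 : ℝ) < l := by exact_mod_cast hl
    rw [bA, abs_mul, abs_inv, abs_of_pos hl']
    calc (l : ℝ)⁻¹ * |bS T f l ω| ≤ (l : ℝ)⁻¹ * (l * C) := by
          have := bS_abs_le (T := T) hC l ω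
          gcongr
      _ = C := by field_simp

lemma bA_limsup_invariant {f : Ω → ℝ} {C : ℝ} (hC : ∀ ω, |f ω| ≤ C) (ω : Ω) :
    limsup (fun l => bA T f l (T ω)) atTop = limsup (fun l => bA T f l ω) atTop := by
  set u : ℕ → ℝ := fun l => bA T f l (T ω) with hu
  set v : ℕ → ℝ := fun l => bA T f (l + 1) ω with hv
  have hid : ∀ l : ℕ, 1 ≤ l → u l - v l = (v l - f ω) * (l : ℝ)⁻¹ := by
    intro l hl
    have hl0 : (l : ℝ) ≠ 0 := by positivity
    have hl1 : ((l : ℝ) + 1) ≠ 0 := by positivity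
    simp only [hu, hv, bA]
    rw [bS_succ]
    push_cast
    field_simp
    ring
  have hbound : ∀ᶠ l in atTop, ‖u l - v l‖ ≤ (C + |f ω|) * (l : ℝ)⁻¹ := by
    filter_upwards [eventually_ge_atTop 1] with l hl
    rw [hid l hl, Real.norm_eq_abs, abs_mul, abs_inv, Nat.abs_cast]
    have h1 : |v l - f ω| ≤ C + |f ω| := by
      have := bA_abs_le (T := T) hC (l + 1) ω
      calc |v l - f ω| ≤ |v l| + |f ω| := abs_sub _ _
        _ ≤ C + |f ω| := by simp only [hv]; gcongr
    gcongr
  have htends : Tendsto (fun l : ℕ => (C + |f ω|) * (l : ℝ)⁻¹) atTop (nhds 0) := by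
    have := tendsto_inv_atTop_nhds_zero_nat.const_mul (C + |f ω|)
    simpa using this
  have hsub : Tendsto (fun l => u l - v l) atTop (nhds 0) :=
    squeeze_zero_norm' hbound htends
  have h1 : limsup u atTop = limsup v atTop :=
    limsup_eq_of_tendsto_sub (fun l => bA_abs_le hC l (T ω))
      (fun l => bA_abs_le hC (l + 1) ω) hsub
  have h2 : limsup v atTop = limsup (fun l => bA T f l ω) atTop :=
    limsup_nat_add (fun l => bA T f l ω) 1
  rw [h1, h2]

/-- One-sided Birkhoff: a.e. the limsup of Birkhoff averages is at most the mean. -/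
lemma birkhoff_limsup_le (hS : Ergodic T μ) {f : Ω → ℝ} (hf : Measurable f)
    {C : ℝ} (hC : ∀ ω, |f ω| ≤ C) :
    ∀ᵐ ω ∂μ, limsup (fun l : ℕ => bA T f l ω) atTop ≤ ∫ ω, f ω ∂μ := by
  have hTm := hS.toMeasurePreserving.measurable
  set I : ℝ := ∫ ω, f ω ∂μ with hI
  set L : Ω → ℝ := fun ω => limsup (fun l : ℕ => bA T f l ω) atTop with hL
  have hLm : Measurable L := by
    apply Measurable.limsup
    intro l
    exact ((bS_meas hTm hf l).const_mul _)
  have hLinv : ∀ ω, L (T ω) = L ω := fun ω => bA_limsup_invariant hC ω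
  -- for every positive ε the excess set is null
  have hkey : ∀ ε : ℝ, 0 < ε → μ {ω | I + ε < L ω} = 0 := by
    intro ε hε
    set F : Set Ω := {ω | I + ε < L ω} with hF
    have hFm : MeasurableSet F := measurableSet_lt measurable_const hLm
    have hFinv : T ⁻¹' F = F := by
      ext ω
      simp only [hF, Set.mem_preimage, Set.mem_setOf_eq, hLinv ω]
    rcases hS.toPreErgodic.measure_self_or_compl_eq_zero hFm hFinv with h0 | h1
    · exact h0
    · -- F has full measure: contradiction with the maximal ergodic theorem
      exfalso
      set g : Ω → ℝ := fun ω => f ω - (I + ε) with hg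
      have hgm : Measurable g := hf.sub measurable_const
      have hgb : ∀ ω, |g ω| ≤ C + |I + ε| := fun ω =>
        calc |g ω| ≤ |f ω| + |I + ε| := abs_sub _ _
          _ ≤ C + |I + ε| := by gcongr; exact hC ω
      have hFae : ∀ᵐ ω ∂μ, ω ∈ F := by
        rw [MeasureTheory.ae_iff]
        exact h1
      have hfull : ∀ᵐ ω ∂μ, ∃ n : ℕ, 0 < bS T g (n + 1) ω := by
        filter_upwards [hFae] with ω hω
        have hlt : I + ε < limsup (fun l : ℕ => bA T f l ω) atTop := hω
        have hfreq : ∃ᶠ l in atTop, I + ε < bA T f l ω :=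
          frequently_lt_of_lt_limsup
            ((bddu_ge (fun l => bA_abs_le hC l ω)).isCoboundedUnder_le) hlt
        obtain ⟨l, hl1, hl2⟩ := (hfreq.and_eventually (eventually_ge_atTop 1)).exists
        obtain ⟨m, rfl⟩ := Nat.exists_eq_add_of_le hl2
        refine ⟨m, ?_⟩
        have hpos : (0 : ℝ) < (1 + m : ℕ) := by positivity
        have hSsum : bS T g (1 + m) ω = bS T f (1 + m) ω - (1 + m : ℕ) * (I + ε) := by
          simp only [hg, bS, Finset.sum_sub_distrib, Finset.sum_const, Finset.card_range,
            nsmul_eq_mul]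
        have hSf : bS T f (1 + m) ω = (1 + m : ℕ) * bA T f (1 + m) ω := by
          rw [bA, ← mul_assoc, mul_inv_cancel₀ (ne_of_gt hpos), one_mul]
        have : (1 + m : ℕ) * (I + ε) < (1 + m : ℕ) * bA T f (1 + m) ω :=
          (mul_lt_mul_iff_right₀ hpos).mpr hl1
        have h1m : (1 + m : ℕ) = m + 1 := by omega
        rw [h1m] at hSsum hSf this
        rw [hSsum, hSf]
        linarith
      have h0le : 0 ≤ ∫ ω, g ω ∂μ :=
        maximal_ergodic hS.toMeasurePreserving hgm hgb hfull
      have hgint : ∫ ω, g ω ∂μ = -ε := by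
        rw [hg]
        rw [integral_sub (integrable_of_bdd hf hC) (integrable_const _), integral_const]
        simp [hI]
      rw [hgint] at h0le
      linarith
  -- combine over ε = 1/(k+1)
  have hae : ∀ᵐ ω ∂μ, ∀ k : ℕ, ¬ (I + ((k : ℝ) + 1)⁻¹ < L ω) := by
    rw [ae_all_iff]
    intro k
    have hk : (0 : ℝ) < ((k : ℝ) + 1)⁻¹ := by positivity
    have h0 := hkey _ hk
    have := (MeasureTheory.measure_eq_zero_iff_ae_notMem (μ := μ)).mp h0
    simpa using this
  filter_upwards [hae] with ω hω
  by_contra hcon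
  push_neg at hcon
  obtain ⟨k, hk⟩ := exists_nat_one_div_lt (sub_pos.mpr hcon)
  exact hω k (by rw [one_div] at hk; linarith)

/-- **Birkhoff's pointwise ergodic theorem** for bounded measurable functions. -/
lemma birkhoff (hS : Ergodic T μ) {f : Ω → ℝ} (hf : Measurable f)
    {C : ℝ} (hC : ∀ ω, |f ω| ≤ C) :
    ∀ᵐ ω ∂μ, Tendsto (fun l : ℕ => (l : ℝ)⁻¹ * bS T f l ω) atTop (nhds (∫ ω, f ω ∂μ)) := by
  have hneg : ∀ᵐ ω ∂μ, limsup (fun l : ℕ => bA T (fun x => -f x) l ω) atTop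
      ≤ ∫ ω, -f ω ∂μ :=
    birkhoff_limsup_le hS hf.neg (C := C) (fun ω => by simpa using hC ω)
  have hpos := birkhoff_limsup_le hS hf hC
  filter_upwards [hpos, hneg] with ω h1 h2
  have hbSneg : ∀ l, bA T (fun x => -f x) l ω = -(bA T f l ω) := by
    intro l
    simp [bA, bS, Finset.sum_neg_distrib]
  have h2' : limsup (fun l => -(bA T f l ω)) atTop ≤ -∫ ω, f ω ∂μ := by
    rw [← funext hbSneg]
    rwa [integral_neg] at h2
  have hliminf : ∫ ω, f ω ∂μ ≤ liminf (fun l => bA T f l ω) atTop := by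
    rw [← neg_limsup_neg]
    linarith
  have := tendsto_of_le_liminf_of_limsup_le hliminf h1
    (bddu_le (fun l => bA_abs_le hC l ω)) (bddu_ge (fun l => bA_abs_le hC l ω))
  exact this

end BirkhoffThm

/-- Almost-sure consistency of the empirical ridge-regression minimiser along an ergodic
trajectory: the empirical regularised least-squares solution `W_ℓ(ω)` converges
`μ`-almost surely to the population solution `W_∞` (central step in the proofs of
Theorems 2 and 3 of the paper). -/
theorem stmt7 {n : ℕ} {Ω : Type*} [MeasurableSpace Ω] (μ : Measure Ω) [IsProbabilityMeasure μ]
    (S : Ω → Ω) (hS : Ergodic S μ)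
    (φ : Ω → Fin n → ℝ) (r : Ω → ℝ)
    (hφm : Measurable φ) (hrm : Measurable r)
    (hbdd : ∃ M : ℝ, ∀ ω, (∀ i, |φ ω i| ≤ M) ∧ |r ω| ≤ M)
    (lam : ℝ) (hlam : 0 < lam)
    (Ml : ℕ → Ω → Matrix (Fin n) (Fin n) ℝ)
    (hMl : ∀ (l : ℕ) (ω : Ω), Ml l ω =
      (l : ℝ)⁻¹ • ∑ k ∈ Finset.range l, vecMulVec (φ (S^[k] ω)) (φ (S^[k] ω)))
    (bl : ℕ → Ω → Fin n → ℝ)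
    (hbl : ∀ (l : ℕ) (ω : Ω), bl l ω =
      (l : ℝ)⁻¹ • ∑ k ∈ Finset.range l, r (S^[k] ω) • φ (S^[k] ω))
    (Wl : ℕ → Ω → Fin n → ℝ)
    (hWl : ∀ (l : ℕ) (ω : Ω), Wl l ω =
      (Ml l ω + lam • (1 : Matrix (Fin n) (Fin n) ℝ))⁻¹.mulVec (bl l ω))
    (hWlmin : ∀ (l : ℕ) (ω : Ω), 1 ≤ l → ∀ W : Fin n → ℝ, W ≠ Wl l ω →
      ((l : ℝ)⁻¹ * ∑ k ∈ Finset.range l,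
          ((∑ i, Wl l ω i * φ (S^[k] ω) i) - r (S^[k] ω)) ^ 2) + lam * ∑ j, Wl l ω j ^ 2 <
      ((l : ℝ)⁻¹ * ∑ k ∈ Finset.range l,
          ((∑ i, W i * φ (S^[k] ω) i) - r (S^[k] ω)) ^ 2) + lam * ∑ j, W j ^ 2)
    (Minf : Matrix (Fin n) (Fin n) ℝ)
    (hMinf : ∀ i j, Minf i j = ∫ ω, φ ω i * φ ω j ∂μ)
    (binf : Fin n → ℝ) (hbinf : ∀ i, binf i = ∫ ω, φ ω i * r ω ∂μ)
    (Winf : Fin n → ℝ)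
    (hWinf : Winf = (Minf + lam • (1 : Matrix (Fin n) (Fin n) ℝ))⁻¹.mulVec binf)
    (hWinfmin : ∀ W : Fin n → ℝ, W ≠ Winf →
      (∫ ω, ((∑ i, Winf i * φ ω i) - r ω) ^ 2 ∂μ) + lam * ∑ j, Winf j ^ 2 <
      (∫ ω, ((∑ i, W i * φ ω i) - r ω) ^ 2 ∂μ) + lam * ∑ j, W j ^ 2) :
    ∀ᵐ ω ∂μ, Tendsto (fun l : ℕ => Wl l ω) atTop (nhds Winf) := by
  obtain ⟨M, hbM⟩ := hbdd
  have hTm := hS.toMeasurePreserving.measurable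
  have hφi : ∀ i, Measurable fun ω => φ ω i := fun i => (measurable_pi_apply i).comp hφm
  have hb2 : ∀ i j, ∀ ω : Ω, |φ ω i * φ ω j| ≤ M * M := by
    intro i j ω
    rw [abs_mul]
    exact mul_le_mul ((hbM ω).1 i) ((hbM ω).1 j) (abs_nonneg _)
      (le_trans (abs_nonneg _) ((hbM ω).1 i))
  have hbr : ∀ i, ∀ ω : Ω, |φ ω i * r ω| ≤ M * M := by
    intro i ω
    rw [abs_mul]
    exact mul_le_mul ((hbM ω).1 i) ((hbM ω).2) (abs_nonneg _)
      (le_trans (abs_nonneg _) ((hbM ω).1 i))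
  -- entrywise a.e. convergence via Birkhoff
  have hMent : ∀ i j, ∀ᵐ ω ∂μ, Tendsto
      (fun l : ℕ => (l : ℝ)⁻¹ * bS S (fun x => φ x i * φ x j) l ω) atTop
      (nhds (Minf i j)) := by
    intro i j
    rw [hMinf i j]
    exact birkhoff hS ((hφi i).mul (hφi j)) (hb2 i j)
  have hbent : ∀ i, ∀ᵐ ω ∂μ, Tendsto
      (fun l : ℕ => (l : ℝ)⁻¹ * bS S (fun x => φ x i * r x) l ω) atTop
      (nhds (binf i)) := by
    intro i
    rw [hbinf i]
    exact birkhoff hS ((hφi i).mul hrm) (hbr i)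
  have hM1 : ∀ᵐ ω ∂μ, ∀ i j, Tendsto
      (fun l : ℕ => (l : ℝ)⁻¹ * bS S (fun x => φ x i * φ x j) l ω) atTop
      (nhds (Minf i j)) := ae_all_iff.2 fun i => ae_all_iff.2 fun j => hMent i j
  have hb1 : ∀ᵐ ω ∂μ, ∀ i, Tendsto
      (fun l : ℕ => (l : ℝ)⁻¹ * bS S (fun x => φ x i * r x) l ω) atTop
      (nhds (binf i)) := ae_all_iff.2 hbent
  -- positive definiteness of the limit matrix
  set A : Matrix (Fin n) (Fin n) ℝ := Minf + lam • 1 with hA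
  have hint2 : ∀ i j, Integrable (fun ω => φ ω i * φ ω j) μ := fun i j =>
    integrable_of_bdd ((hφi i).mul (hφi j)) (hb2 i j)
  have hMsymm : ∀ i j, Minf j i = Minf i j := by
    intro i j
    rw [hMinf, hMinf]
    congr 1
    ext ω
    ring
  have hherm : A.IsHermitian := by
    rw [Matrix.IsHermitian]
    ext i j
    simp only [hA, Matrix.conjTranspose_apply, Matrix.add_apply, Matrix.smul_apply,
      Matrix.one_apply, star_trivial, hMsymm i j, smul_eq_mul]
    congr 1
    simp [eq_comm]
  have hquad : ∀ x : Fin n → ℝ, dotProduct x (Minf *ᵥ x)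
      = ∫ ω, (∑ i, x i * φ ω i) ^ 2 ∂μ := by
    intro x
    have h1 : ∀ i j, (x i * x j) * Minf i j
        = ∫ ω, (x i * x j) * (φ ω i * φ ω j) ∂μ := by
      intro i j
      rw [hMinf, ← integral_const_mul]
    calc dotProduct x (Minf *ᵥ x) = ∑ i, ∑ j, (x i * x j) * Minf i j := by
          simp only [dotProduct, mulVec, Finset.mul_sum]
          exact Finset.sum_congr rfl fun i _ => Finset.sum_congr rfl fun j _ => by ring
      _ = ∑ i, ∑ j, ∫ ω, (x i * x j) * (φ ω i * φ ω j) ∂μ :=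
          Finset.sum_congr rfl fun i _ => Finset.sum_congr rfl fun j _ => h1 i j
      _ = ∫ ω, ∑ i, ∑ j, (x i * x j) * (φ ω i * φ ω j) ∂μ := by
          have hstep1 : (∑ i, ∑ j, ∫ ω, (x i * x j) * (φ ω i * φ ω j) ∂μ)
              = ∑ i, ∫ ω, ∑ j, (x i * x j) * (φ ω i * φ ω j) ∂μ :=
            Finset.sum_congr rfl fun i _ =>
              (integral_finset_sum _ fun j _ => (hint2 i j).const_mul (x i * x j)).symm
          rw [hstep1]
          exact (integral_finset_sum _ fun i _ =>
            integrable_finset_sum _ fun j _ => (hint2 i j).const_mul (x i * x j)).symm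
      _ = ∫ ω, (∑ i, x i * φ ω i) ^ 2 ∂μ := by
          congr 1
          ext ω
          rw [sq, Finset.sum_mul_sum]
          exact Finset.sum_congr rfl fun i _ => Finset.sum_congr rfl fun j _ => by ring
  have hpd : A.PosDef := by
    refine Matrix.posDef_iff_dotProduct_mulVec.2 ⟨hherm, fun x hx => ?_⟩
    have hstar : star x = x := funext fun i => rfl
    have hxx : 0 < dotProduct x x := by
      obtain ⟨i, hi⟩ := Function.ne_iff.mp hx
      exact Finset.sum_pos' (fun j _ => mul_self_nonneg _)
        ⟨i, Finset.mem_univ i, mul_self_pos.mpr hi⟩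
    have hsq : 0 ≤ ∫ ω, (∑ i, x i * φ ω i) ^ 2 ∂μ :=
      integral_nonneg fun ω => sq_nonneg _
    rw [hstar, hA, Matrix.add_mulVec, dotProduct_add, Matrix.smul_mulVec,
      Matrix.one_mulVec, dotProduct_smul, hquad, smul_eq_mul]
    have : 0 < lam * dotProduct x x := mul_pos hlam hxx
    linarith
  have hdet : A.det ≠ 0 := ne_of_gt hpd.det_pos
  -- continuity of the solution map at the limit point
  have hRinv : ContinuousAt Ring.inverse A.det := by
    rw [Ring.inverse_eq_inv']
    exact continuousAt_inv₀ hdet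
  have hinvA : ContinuousAt Inv.inv A := continuousAt_matrix_inv A hRinv
  have hmv : Continuous fun p : Matrix (Fin n) (Fin n) ℝ × (Fin n → ℝ) => p.1 *ᵥ p.2 :=
    continuous_fst.matrix_mulVec continuous_snd
  have hcont : ContinuousAt
      (fun p : Matrix (Fin n) (Fin n) ℝ × (Fin n → ℝ) => p.1⁻¹ *ᵥ p.2) (A, binf) := by
    have h1 : ContinuousAt (fun p : Matrix (Fin n) (Fin n) ℝ × (Fin n → ℝ) =>
        ((p.1)⁻¹, p.2)) (A, binf) :=
      ContinuousAt.prodMk (hinvA.comp continuousAt_fst) continuousAt_snd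
    exact hmv.continuousAt.comp h1
  -- conclude
  filter_upwards [hM1, hb1] with ω hMω hbω
  have hMt : Tendsto (fun l => Ml l ω) atTop (nhds Minf) := by
    refine tendsto_pi_nhds.2 fun i => ?_
    rw [tendsto_pi_nhds]
    intro j
    have heq : (fun l => Ml l ω i j)
        = fun l : ℕ => (l : ℝ)⁻¹ * bS S (fun x => φ x i * φ x j) l ω := by
      funext l
      rw [hMl]
      simp [bS, Matrix.smul_apply, Matrix.sum_apply, Matrix.vecMulVec_apply, smul_eq_mul]
    rw [show (fun l => (Ml l ω) i j) = (fun l => Ml l ω i j) from rfl, heq]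
    exact hMω i j
  have hbt : Tendsto (fun l => bl l ω) atTop (nhds binf) := by
    rw [tendsto_pi_nhds]
    intro i
    have heq : (fun l => bl l ω i)
        = fun l : ℕ => (l : ℝ)⁻¹ * bS S (fun x => φ x i * r x) l ω := by
      funext l
      rw [hbl]
      simp [bS, Finset.sum_apply, Pi.smul_apply, smul_eq_mul, mul_comm]
    rw [heq]
    exact hbω i
  have hAl : Tendsto (fun l => Ml l ω + lam • (1 : Matrix (Fin n) (Fin n) ℝ)) atTop
      (nhds A) := by
    rw [hA]
    exact hMt.add tendsto_const_nhds
  have final := hcont.tendsto.comp (hAl.prodMk_nhds hbt)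
  have hWeq : (fun l => Wl l ω)
      = fun l => (Ml l ω + lam • (1 : Matrix (Fin n) (Fin n) ℝ))⁻¹ *ᵥ bl l ω :=
    funext fun l => hWl l ω
  rw [hWeq, hWinf]
  exact final
end

section
/- Let A be a real n × n matrix with operator 2-norm ‖A‖ < 1, C a real n × d matrix, ζ ∈ ℝⁿ, and let σ : ℝⁿ → ℝⁿ be the componentwise ReLU map. Let z = (z_k)_{k ∈ ℤ} be a bi-infinite input sequence in ℝᵈ that is bounded, i.e. there exists M with ‖z_k‖ ≤ M for all k ∈ ℤ. Then there exists exactly one bounded bi-infinite sequence x = (x_k)_{k ∈ ℤ} in ℝⁿ satisfying x_{k+1} = σ(A x_k + C z_k + ζ) for all k ∈ ℤ. (That is, the ESN has the Echo State Property on bounded inputs.) -/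
open BoundedContinuousFunction Function

lemma euclid_norm_le_of_abs_le {n : ℕ} (f g : EuclideanSpace ℝ (Fin n))
    (h : ∀ i, |f i| ≤ |g i|) : ‖f‖ ≤ ‖g‖ := by
  rw [EuclideanSpace.norm_eq, EuclideanSpace.norm_eq]
  apply Real.sqrt_le_sqrt
  apply Finset.sum_le_sum
  intro i _
  simp only [Real.norm_eq_abs]
  exact pow_le_pow_left₀ (abs_nonneg _) (h i) 2

/-- The Echo State Property: if `‖A‖ < 1` then for every bounded bi-infinite input
sequence `z` there is exactly one bounded bi-infinite reservoir-state sequence `x`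
satisfying `x_{k+1} = σ(A x_k + C z_k + ζ)` for all `k ∈ ℤ`. -/
theorem stmt9 {n d : ℕ}
    (A : EuclideanSpace ℝ (Fin n) →L[ℝ] EuclideanSpace ℝ (Fin n)) (hA : ‖A‖ < 1)
    (C : EuclideanSpace ℝ (Fin d) →L[ℝ] EuclideanSpace ℝ (Fin n))
    (ζ : EuclideanSpace ℝ (Fin n))
    (relu : EuclideanSpace ℝ (Fin n) → EuclideanSpace ℝ (Fin n))
    (hrelu : ∀ (x : EuclideanSpace ℝ (Fin n)) (i : Fin n), relu x i = max 0 (x i))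
    (z : ℤ → EuclideanSpace ℝ (Fin d)) (hz : ∃ M : ℝ, ∀ k : ℤ, ‖z k‖ ≤ M) :
    ∃! x : ℤ → EuclideanSpace ℝ (Fin n),
      (∃ M : ℝ, ∀ k : ℤ, ‖x k‖ ≤ M) ∧
      (∀ k : ℤ, x (k + 1) = relu (A (x k) + C (z k) + ζ)) := by
  obtain ⟨M, hM⟩ := hz
  have hcont : ∀ f : ℤ → EuclideanSpace ℝ (Fin n), Continuous f := fun f => continuous_of_discreteTopology
  -- relu is 1-Lipschitz
  have key : ∀ u v : EuclideanSpace ℝ (Fin n), ‖relu u - relu v‖ ≤ ‖u - v‖ := by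
    intro u v
    apply euclid_norm_le_of_abs_le
    intro i
    have h1 : (relu u - relu v) i = max 0 (u i) - max 0 (v i) := by
      simp [hrelu, PiLp.sub_apply]
    have h2 : (u - v) i = u i - v i := by simp
    rw [h1, h2, max_comm 0 (u i), max_comm 0 (v i)]
    exact abs_max_sub_max_le_abs _ _ _
  have relu_norm : ∀ u : EuclideanSpace ℝ (Fin n), ‖relu u‖ ≤ ‖u‖ := by
    intro u
    apply euclid_norm_le_of_abs_le
    intro i
    rw [hrelu]
    rw [abs_of_nonneg (le_max_left 0 (u i))]
    exact max_le (abs_nonneg _) (le_abs_self _)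
  -- the operator
  have bndT : ∀ (f : ℤ → EuclideanSpace ℝ (Fin n)) (Mf : ℝ), (∀ k, ‖f k‖ ≤ Mf) → ∀ k : ℤ,
      ‖relu (A (f (k - 1)) + C (z (k - 1)) + ζ)‖ ≤ ‖A‖ * Mf + (‖C‖ * M + ‖ζ‖) := by
    intro f Mf hMf k
    refine (relu_norm _).trans ?_
    calc ‖A (f (k-1)) + C (z (k-1)) + ζ‖
        ≤ ‖A (f (k-1))‖ + ‖C (z (k-1))‖ + ‖ζ‖ := norm_add₃_le
      _ ≤ ‖A‖ * Mf + (‖C‖ * M + ‖ζ‖) := by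
          have h1 : ‖A (f (k-1))‖ ≤ ‖A‖ * Mf :=
            (A.le_opNorm _).trans (mul_le_mul_of_nonneg_left (hMf _) (norm_nonneg A))
          have h2 : ‖C (z (k-1))‖ ≤ ‖C‖ * M :=
            (C.le_opNorm _).trans (mul_le_mul_of_nonneg_left (hM _) (norm_nonneg C))
          linarith
  let T : BoundedContinuousFunction ℤ (EuclideanSpace ℝ (Fin n)) → BoundedContinuousFunction ℤ (EuclideanSpace ℝ (Fin n)) := fun f =>
    BoundedContinuousFunction.ofNormedAddCommGroup
      (fun k => relu (A (f (k - 1)) + C (z (k - 1)) + ζ)) (hcont _)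
      (‖A‖ * ‖f‖ + (‖C‖ * M + ‖ζ‖))
      (bndT f ‖f‖ (fun k => f.norm_coe_le_norm k))
  have Tapp : ∀ f k, T f k = relu (A (f (k - 1)) + C (z (k - 1)) + ζ) := fun f k => rfl
  -- contraction
  have hK : ‖A‖₊ < 1 := by
    exact_mod_cast hA
  have hlip : LipschitzWith ‖A‖₊ T := by
    apply LipschitzWith.of_dist_le_mul
    intro f g
    rw [coe_nnnorm]
    rw [BoundedContinuousFunction.dist_le (mul_nonneg (norm_nonneg A) dist_nonneg)]
    intro k
    rw [dist_eq_norm]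
    have e1 : ∀ a b : EuclideanSpace ℝ (Fin n), (A a + C (z (k-1)) + ζ) - (A b + C (z (k-1)) + ζ)
        = A (a - b) := by intro a b; rw [map_sub]; abel
    calc ‖T f k - T g k‖ ≤ ‖(A (f (k-1)) + C (z (k-1)) + ζ) - (A (g (k-1)) + C (z (k-1)) + ζ)‖ := by
          rw [Tapp, Tapp]; exact key _ _
      _ = ‖A (f (k-1) - g (k-1))‖ := by rw [e1]
      _ ≤ ‖A‖ * ‖f (k-1) - g (k-1)‖ := A.le_opNorm _
      _ ≤ ‖A‖ * dist f g := by
          apply mul_le_mul_of_nonneg_left _ (norm_nonneg A)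
          rw [← dist_eq_norm]
          exact BoundedContinuousFunction.dist_coe_le_dist _
  have hc : ContractingWith ‖A‖₊ T := ⟨hK, hlip⟩
  set xf := hc.fixedPoint T with hxf
  have hfix : T xf = xf := hc.fixedPoint_isFixedPt
  refine ⟨⇑xf, ⟨⟨‖xf‖, fun k => xf.norm_coe_le_norm k⟩, ?_⟩, ?_⟩
  · intro k
    conv_lhs => rw [← hfix]
    rw [Tapp]
    congr 2 <;> · congr 1 <;> simp
  · rintro y ⟨⟨My, hMy⟩, hrec⟩
    let yf : BoundedContinuousFunction ℤ (EuclideanSpace ℝ (Fin n)) :=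
      BoundedContinuousFunction.ofNormedAddCommGroup y (hcont y) My hMy
    have hyfix : IsFixedPt T yf := by
      apply BoundedContinuousFunction.ext
      intro k
      rw [Tapp]
      have : yf (k - 1 + 1) = relu (A (yf (k-1)) + C (z (k-1)) + ζ) := hrec (k-1)
      rw [show k - 1 + 1 = k by ring] at this
      exact this.symm
    have : yf = xf := hc.fixedPoint_unique hyfix
    funext k
    exact congrFun (congrArg DFunLike.coe this) k
end

section
/- Fix constants c > 0, ε > 0, ω ∈ ℝ, and γ ∈ (0, 1), and define F : ℝ × ℝ × (−c, c) → ℝ by F(t, y, v) = γᵗ ( −ε log(cos(π v / (2c))) − cos(ω t) sin(2π y) − 1 ), where γᵗ = exp(t log γ). Let y : ℝ → ℝ be twice continuously differentiable with |y'(t)| < c for all t. Then y satisfies the Euler–Lagrange equation d/dt [ ∂F/∂v (t, y(t), y'(t)) ] − ∂F/∂y (t, y(t), y'(t)) = 0 for all t if and only if for all t: (π ε / (2c)) ( log(γ) · tan(π y'(t) / (2c)) + (π y''(t) / (2c)) · sec²(π y'(t) / (2c)) ) + 2π cos(ω t) cos(2π y(t)) = 0. -/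
set_option maxHeartbeats 1000000


open Real

/-- The Euler–Lagrange equation for the smoothed Bee World cost
`F(t, y, v) = γᵗ(−ε log(cos(πv/(2c))) − cos(ωt) sin(2πy) − 1)` along a `C²` trajectory
with `|y'| < c` is equivalent to the second-order ODE
`(πε/(2c))(log γ · tan(πy'/(2c)) + (πy''/(2c)) sec²(πy'/(2c))) + 2π cos(ωt) cos(2πy) = 0`
(Section 4.3 of the paper). -/
theorem stmt10 (c ε ω γ : ℝ) (hc : 0 < c) (hε : 0 < ε) (hγ0 : 0 < γ) (hγ1 : γ < 1)
    (F : ℝ → ℝ → ℝ → ℝ)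
    (hF : ∀ t y v, F t y v = Real.exp (t * Real.log γ) *
      (-ε * Real.log (Real.cos (π * v / (2 * c)))
        - Real.cos (ω * t) * Real.sin (2 * π * y) - 1))
    (y : ℝ → ℝ) (hy : ContDiff ℝ 2 y) (hy' : ∀ t, |deriv y t| < c) :
    (∀ t : ℝ,
        deriv (fun s => deriv (fun v => F s (y s) v) (deriv y s)) t
          - deriv (fun u => F t u (deriv y t)) (y t) = 0) ↔
    (∀ t : ℝ,
        (π * ε / (2 * c)) *
            (Real.log γ * Real.tan (π * deriv y t / (2 * c))
              + (π * deriv (deriv y) t / (2 * c)) *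
                  (1 / Real.cos (π * deriv y t / (2 * c))) ^ 2)
          + 2 * π * Real.cos (ω * t) * Real.cos (2 * π * y t) = 0) := by
  have hc2 : (0:ℝ) < 2 * c := by linarith
  have hcosw : ∀ w : ℝ, |w| < c → 0 < Real.cos (π * w / (2 * c)) := by
    intro w hw
    apply Real.cos_pos_of_mem_Ioo
    rw [Set.mem_Ioo]
    have habs : |π * w / (2 * c)| < π / 2 := by
      rw [abs_div, abs_mul, abs_of_pos Real.pi_pos, abs_of_pos hc2,
        div_lt_div_iff₀ hc2 two_pos]
      nlinarith [Real.pi_pos]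
    exact abs_lt.mp habs
  -- derivative in v
  have keyv : ∀ s a w : ℝ, |w| < c →
      HasDerivAt (fun v => F s a v)
        (Real.exp (s * Real.log γ) * (ε * (π / (2 * c)) * Real.tan (π * w / (2 * c)))) w := by
    intro s a w hw
    have hcw := hcosw w hw
    have h1 : HasDerivAt (fun v : ℝ => π * v / (2 * c)) (π / (2 * c)) w := by
      simpa using (((hasDerivAt_id w).const_mul π).div_const (2 * c))
    have h2 := (h1.cos).log (ne_of_gt hcw)
    have h3 := (((h2.const_mul (-ε)).sub_const
        (Real.cos (ω * s) * Real.sin (2 * π * a))).sub_const 1).const_mul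
        (Real.exp (s * Real.log γ))
    have heq : (fun v => F s a v) = fun v => Real.exp (s * Real.log γ) *
        (-ε * Real.log (Real.cos (π * v / (2 * c)))
          - Real.cos (ω * s) * Real.sin (2 * π * a) - 1) := by
      funext v; rw [hF]
    rw [heq]
    apply h3.congr_deriv
    rw [Real.tan_eq_sin_div_cos]
    field_simp
  have hgeq : (fun s => deriv (fun v => F s (y s) v) (deriv y s))
      = fun s => Real.exp (s * Real.log γ) *
          (ε * (π / (2 * c)) * Real.tan (π * deriv y s / (2 * c))) := by
    funext s
    exact (keyv s (y s) (deriv y s) (hy' s)).deriv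
  have hdy' : ∀ t : ℝ, HasDerivAt (deriv y) (deriv (deriv y) t) t := by
    have h2 : ContDiff ℝ (1 + 1 : ℕ) y := by exact_mod_cast hy
    have h3 : ContDiff ℝ 1 (deriv y) := by exact_mod_cast (contDiff_succ_iff_deriv.mp (by exact_mod_cast h2)).2.2
    intro t
    exact (h3.differentiable one_ne_zero t).hasDerivAt
  -- derivative in y
  have keyy : ∀ t : ℝ, deriv (fun u => F t u (deriv y t)) (y t) =
      Real.exp (t * Real.log γ) *
        (-(Real.cos (ω * t) * (Real.cos (2 * π * y t) * (2 * π)))) := by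
    intro t
    have h1 : HasDerivAt (fun u : ℝ => 2 * π * u) (2 * π) (y t) := by
      simpa using (hasDerivAt_id (y t)).const_mul (2 * π)
    have h2 := h1.sin
    have h3 := (((h2.const_mul (Real.cos (ω * t))).const_sub
        (-ε * Real.log (Real.cos (π * deriv y t / (2 * c))))).sub_const 1).const_mul
        (Real.exp (t * Real.log γ))
    have heq : (fun u => F t u (deriv y t)) = fun u => Real.exp (t * Real.log γ) *
        (-ε * Real.log (Real.cos (π * deriv y t / (2 * c)))
          - Real.cos (ω * t) * Real.sin (2 * π * u) - 1) := by
      funext u; rw [hF]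
    rw [heq]
    rw [h3.deriv]
  have main : ∀ t : ℝ,
      deriv (fun s => deriv (fun v => F s (y s) v) (deriv y s)) t
        - deriv (fun u => F t u (deriv y t)) (y t)
      = Real.exp (t * Real.log γ) *
          ((π * ε / (2 * c)) *
              (Real.log γ * Real.tan (π * deriv y t / (2 * c))
                + (π * deriv (deriv y) t / (2 * c)) *
                    (1 / Real.cos (π * deriv y t / (2 * c))) ^ 2)
            + 2 * π * Real.cos (ω * t) * Real.cos (2 * π * y t)) := by
    intro t
    have hexp : HasDerivAt (fun s : ℝ => Real.exp (s * Real.log γ))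
        (Real.exp (t * Real.log γ) * Real.log γ) t := by
      simpa using ((hasDerivAt_id t).mul_const (Real.log γ)).exp
    have hinner : HasDerivAt (fun s => π * deriv y s / (2 * c))
        (π * deriv (deriv y) t / (2 * c)) t := by
      simpa [mul_div_assoc] using ((hdy' t).const_mul π).div_const (2 * c)
    have htan : HasDerivAt (fun s => Real.tan (π * deriv y s / (2 * c)))
        (1 / Real.cos (π * deriv y t / (2 * c)) ^ 2 * (π * deriv (deriv y) t / (2 * c))) t := by
      have hne : Real.cos (π * deriv y t / (2 * c)) ≠ 0 := ne_of_gt (hcosw _ (hy' t))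
      have hq := (hinner.sin).div (hinner.cos) hne
      have heq : (fun s => Real.tan (π * deriv y s / (2 * c)))
          = fun s => Real.sin (π * deriv y s / (2 * c)) / Real.cos (π * deriv y s / (2 * c)) := by
        funext s; rw [Real.tan_eq_sin_div_cos]
      rw [heq]
      apply hq.congr_deriv
      have hpc := Real.sin_sq_add_cos_sq (π * deriv y t / (2 * c))
      rw [show Real.cos (π * deriv y t / (2 * c)) * (π * deriv (deriv y) t / (2 * c)) *
            Real.cos (π * deriv y t / (2 * c)) -
            Real.sin (π * deriv y t / (2 * c)) *
              (-Real.sin (π * deriv y t / (2 * c)) * (π * deriv (deriv y) t / (2 * c)))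
          = π * deriv (deriv y) t / (2 * c) from by
        linear_combination (π * deriv (deriv y) t / (2 * c)) * hpc]
      ring
    have hprod := hexp.mul (htan.const_mul (ε * (π / (2 * c))))
    rw [hgeq, HasDerivAt.deriv (f := fun s => Real.exp (s * Real.log γ) * (ε * (π / (2 * c)) * Real.tan (π * deriv y s / (2 * c)))) hprod, keyy t]
    ring
  constructor
  · intro h t
    have ht := h t
    rw [main t] at ht
    exact (mul_eq_zero.mp ht).resolve_left (Real.exp_ne_zero _)
  · intro h t
    rw [main t, h t, mul_zero]
end
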